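/- Let λ be a regular infinite cardinal with 2^λ = λ⁺ and let D be any set. Let Q̄ be the set of all λ-sequences ⟨p_ξ : ξ < λ⟩ where each p_ξ is a partial 0-1 function on D with domain of cardinality less than λ; call two such sequences compatible if they are coordinatewise compatible. Then every subset of Q̄ whose members are pairwise incompatible has cardinality at most λ⁺. (That is, the full-support λ-fold product of the poset of partial 0-1 functions on D with domains of size < λ has the λ⁺⁺-chain condition.) -/

import Mathlib

open Cardinal

universe u

/-- Two partial 0-1 functions on `D` (represented as `D → Option Bool`, with
domain `{x | p x ≠ none}`) are compatible if they agree on the intersection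
of their domains. -/
def Compat {D : Type u} (p q : D → Option Bool) : Prop :=
  ∀ x a b, p x = some a → q x = some b → a = b

namespace Stmt2Proof

variable {D ι : Type u}

/-- The domain of a condition, as a subset of `ι × D`. -/
def dmn (f : ι → D → Option Bool) : Set (ι × D) := {z | f z.1 z.2 ≠ none}

/-- The union of the domains of all members of `C`. -/
def SC (C : Set (ι → D → Option Bool)) : Set (ι × D) := ⋃ h ∈ C, dmn h

theorem SC_mono {C C' : Set (ι → D → Option Bool)} (h : C ⊆ C') : SC C ⊆ SC C' := by
  intro z hz
  obtain ⟨g, hg, hzg⟩ := Set.mem_iUnion₂.1 hz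
  exact Set.mem_iUnion₂.2 ⟨g, h hg, hzg⟩

theorem mem_SC {C : Set (ι → D → Option Bool)} {g : ι → D → Option Bool}
    (hg : g ∈ C) {z : ι × D} (hz : z ∈ dmn g) : z ∈ SC C :=
  Set.mem_iUnion₂.2 ⟨g, hg, hz⟩

open Classical in
/-- The restriction of `g` to `SC C`, extended by `none`. -/
noncomputable def rrestr (C : Set (ι → D → Option Bool)) (g : ι → D → Option Bool) :
    ι × D → Option Bool := fun z => if z ∈ SC C then g z.1 z.2 else none

theorem rrestr_of_mem {C : Set (ι → D → Option Bool)} {g : ι → D → Option Bool}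
    {z : ι × D} (hz : z ∈ SC C) : rrestr C g z = g z.1 z.2 := by
  simp [rrestr, hz]

open Classical in
/-- Pick some element of `A` whose restriction to `SC C` is `q`, if one exists. -/
noncomputable def pick (A C : Set (ι → D → Option Bool)) :
    (ι × D → Option Bool) → (ι → D → Option Bool) :=
  fun q => if h : ∃ g ∈ A, rrestr C g = q then h.choose else fun _ _ => none

/-- Small-support partial functions living on `SC C`. -/
def smallQ (lam : Cardinal.{u}) (C : Set (ι → D → Option Bool)) :
    Set (ι × D → Option Bool) :=
  {q | {z | q z ≠ none} ⊆ SC C ∧ #{z | q z ≠ none} ≤ lam}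

/-- The set of picked witnesses for all small-support restriction patterns on `SC C`. -/
noncomputable def W (lam : Cardinal.{u}) (A C : Set (ι → D → Option Bool)) :
    Set (ι → D → Option Bool) := pick A C '' smallQ lam C

noncomputable def Bseq (lam : Cardinal.{u}) (A : Set (ι → D → Option Bool)) :
    Ordinal.{u} → Set (ι → D → Option Bool)
  | α =>
    (⋃ i : α.ToType, Bseq lam A ((Ordinal.ToType.mk (o := α)).symm i).val) ∪
      W lam A (⋃ i : α.ToType, Bseq lam A ((Ordinal.ToType.mk (o := α)).symm i).val)
termination_by α => α
decreasing_by all_goals exact ((Ordinal.ToType.mk (o := α)).symm i).prop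

noncomputable def prevB (lam : Cardinal.{u}) (A : Set (ι → D → Option Bool))
    (α : Ordinal.{u}) : Set (ι → D → Option Bool) :=
  ⋃ i : α.ToType, Bseq lam A ((Ordinal.ToType.mk (o := α)).symm i).val

theorem Bseq_def (lam : Cardinal.{u}) (A : Set (ι → D → Option Bool)) (α : Ordinal.{u}) :
    Bseq lam A α = prevB lam A α ∪ W lam A (prevB lam A α) := by
  rw [Bseq]; rfl

theorem Bseq_subset_prevB {lam : Cardinal.{u}} {A : Set (ι → D → Option Bool)}
    {β α : Ordinal.{u}} (h : β < α) : Bseq lam A β ⊆ prevB lam A α := by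
  intro x hx
  refine Set.mem_iUnion.2 ⟨Ordinal.ToType.mk (o := α) ⟨β, h⟩, ?_⟩
  simpa using hx

theorem mem_prevB {lam : Cardinal.{u}} {A : Set (ι → D → Option Bool)}
    {α : Ordinal.{u}} {x} (h : x ∈ prevB lam A α) :
    ∃ β < α, x ∈ Bseq lam A β := by
  obtain ⟨i, hi⟩ := Set.mem_iUnion.1 h
  exact ⟨_, ((Ordinal.ToType.mk (o := α)).symm i).prop, hi⟩

theorem mk_dmn_le {lam : Cardinal.{u}} (hreg : ℵ₀ ≤ lam) (hι : #ι = lam)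
    {f : ι → D → Option Bool} (hf : ∀ ξ : ι, #{x | f ξ x ≠ none} < lam) :
    #(dmn f) ≤ lam := by
  have hsub : dmn f ⊆ ⋃ ξ : ι, (Prod.mk ξ '' {x | f ξ x ≠ none}) := by
    intro z hz
    exact Set.mem_iUnion.2 ⟨z.1, ⟨z.2, hz, Prod.mk.eta⟩⟩
  refine (mk_le_mk_of_subset hsub).trans ((mk_iUnion_le _).trans ?_)
  have h1 : ⨆ ξ : ι, #(Prod.mk ξ '' {x | f ξ x ≠ none}) ≤ lam :=
    ciSup_le' fun ξ => mk_image_le.trans (hf ξ).le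
  calc #ι * ⨆ ξ : ι, #(Prod.mk ξ '' {x | f ξ x ≠ none}) ≤ lam * lam := by
        rw [hι]; exact mul_le_mul_right h1 _
    _ = lam := mul_eq_self hreg

/-- Every element appearing in the construction is either in `A` or the trivial
condition. -/
def IsGood (A : Set (ι → D → Option Bool)) (h : ι → D → Option Bool) : Prop :=
  h ∈ A ∨ h = fun _ _ => none

theorem pick_isGood (A C : Set (ι → D → Option Bool)) (q : ι × D → Option Bool) :
    IsGood A (pick A C q) := by
  classical
  unfold pick
  split
  · next h => exact Or.inl h.choose_spec.1
  · exact Or.inr rfl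

theorem isGood_Bseq {lam : Cardinal.{u}} {A : Set (ι → D → Option Bool)} :
    ∀ α : Ordinal.{u}, ∀ h ∈ Bseq lam A α, IsGood A h := by
  intro α
  induction α using Ordinal.induction with
  | h α IH =>
    intro h hh
    rw [Bseq_def] at hh
    rcases hh with hh | hh
    · obtain ⟨β, hβ, hmem⟩ := mem_prevB hh
      exact IH β hβ h hmem
    · obtain ⟨q, _, hq⟩ := hh
      rw [← hq]
      exact pick_isGood A _ q

theorem isGood_prevB {lam : Cardinal.{u}} {A : Set (ι → D → Option Bool)}
    {α : Ordinal.{u}} {h} (hh : h ∈ prevB lam A α) : IsGood A h := by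
  obtain ⟨β, _, hmem⟩ := mem_prevB hh
  exact isGood_Bseq β h hmem

theorem mk_dmn_of_isGood {lam : Cardinal.{u}} (hreg : ℵ₀ ≤ lam) (hι : #ι = lam)
    {A : Set (ι → D → Option Bool)}
    (hdom : ∀ f ∈ A, ∀ ξ : ι, #{x | f ξ x ≠ none} < lam)
    {h : ι → D → Option Bool} (hg : IsGood A h) : #(dmn h) ≤ lam := by
  rcases hg with hg | hg
  · exact mk_dmn_le hreg hι (hdom h hg)
  · have : dmn h = ∅ := by
      ext z
      simp [dmn, hg]
    rw [this]
    simp [hreg.trans' (by exact_mod_cast le_of_lt (nat_lt_aleph0 0))]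

theorem mk_SC_le {lam : Cardinal.{u}} (hreg : ℵ₀ ≤ lam)
    {C : Set (ι → D → Option Bool)} (hC : #C ≤ Order.succ lam)
    (hgood : ∀ h ∈ C, #(dmn h) ≤ lam) : #(SC C) ≤ Order.succ lam := by
  refine (mk_biUnion_le dmn C).trans ?_
  have h1 : ⨆ h : C, #(dmn h.1) ≤ Order.succ lam :=
    ciSup_le' fun h => (hgood h.1 h.2).trans (Order.le_succ lam)
  calc #C * ⨆ h : C, #(dmn h.1) ≤ Order.succ lam * Order.succ lam :=
        mul_le_mul' hC h1
    _ = Order.succ lam := mul_eq_self (hreg.trans (Order.le_succ lam))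

section Counting
variable {X : Type u}

theorem fiber_mk_le (t : Set X) :
    #({q : X → Option Bool | {z | q z ≠ none} = t}) ≤ (2 : Cardinal.{u}) ^ #t := by
  classical
  have hpow : #(↥t → Bool) = (2 : Cardinal.{u}) ^ #↥t := by
    rw [mk_arrow, mk_bool]
    simp
  rw [← hpow]
  refine mk_le_of_injective (f := fun q : {q : X → Option Bool | {z | q z ≠ none} = t} =>
    fun z : ↥t => (q.1 z.1).getD true) ?_
  rintro ⟨q, hq⟩ ⟨q', hq'⟩ h
  ext1
  funext z
  show q z = q' z
  by_cases hz : z ∈ t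
  · have h1 : q z ≠ none := by rw [← hq] at hz; exact hz
    have h2 : q' z ≠ none := by rw [← hq'] at hz; exact hz
    obtain ⟨a, ha⟩ := Option.ne_none_iff_exists'.1 h1
    obtain ⟨b, hb⟩ := Option.ne_none_iff_exists'.1 h2
    have := congrFun h ⟨z, hz⟩
    simp only [ha, hb, Option.getD_some] at this
    rw [ha, hb, this]
  · have h1 : ¬ q z ≠ none := by rw [← hq] at hz; exact hz
    have h2 : ¬ q' z ≠ none := by rw [← hq'] at hz; exact hz
    rw [not_not] at h1 h2
    rw [h1, h2]

theorem mk_smallQ_aux {lam : Cardinal.{u}} (hreg : ℵ₀ ≤ lam)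
    (hch : (2:Cardinal.{u}) ^ lam = Order.succ lam)
    (S : Set X) (hS : #S ≤ Order.succ lam) :
    #({q : X → Option Bool | {z | q z ≠ none} ⊆ S ∧ #{z | q z ≠ none} ≤ lam}) ≤
      Order.succ lam := by
  classical
  have hsub : {q : X → Option Bool | {z | q z ≠ none} ⊆ S ∧ #{z | q z ≠ none} ≤ lam} ⊆
      ⋃ t : {t : Set X // t ⊆ S ∧ #t ≤ lam},
        {q : X → Option Bool | {z | q z ≠ none} = t.1} := by
    intro q hq
    exact Set.mem_iUnion.2 ⟨⟨{z | q z ≠ none}, hq.1, hq.2⟩, rfl⟩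
  refine (mk_le_mk_of_subset hsub).trans ((mk_iUnion_le _).trans ?_)
  have hK : #{t : Set X // t ⊆ S ∧ #t ≤ lam} ≤ Order.succ lam := by
    refine (mk_bounded_subset_le S lam).trans ?_
    have hmax : max (#S) ℵ₀ ≤ Order.succ lam :=
      max_le hS (hreg.trans (Order.le_succ lam))
    calc max (#S) ℵ₀ ^ lam ≤ (Order.succ lam) ^ lam :=
          power_le_power_right hmax
      _ = Order.succ lam := by rw [← hch, ← power_mul, mul_eq_self hreg]
  have hsup : ⨆ t : {t : Set X // t ⊆ S ∧ #t ≤ lam},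
      #({q : X → Option Bool | {z | q z ≠ none} = t.1}) ≤ Order.succ lam := by
    refine ciSup_le' fun t => (fiber_mk_le t.1).trans ?_
    calc (2 : Cardinal.{u}) ^ #(t.1) ≤ (2 : Cardinal.{u}) ^ lam :=
          power_le_power_left two_ne_zero t.2.2
      _ = Order.succ lam := hch
  calc _ ≤ Order.succ lam * Order.succ lam := mul_le_mul' hK hsup
    _ = Order.succ lam := mul_eq_self (hreg.trans (Order.le_succ lam))

end Counting

theorem mk_W_le {lam : Cardinal.{u}} (hreg : ℵ₀ ≤ lam)
    (hch : (2:Cardinal.{u}) ^ lam = Order.succ lam)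
    {A C : Set (ι → D → Option Bool)} (hSC : #(SC C) ≤ Order.succ lam) :
    #(W lam A C) ≤ Order.succ lam := by
  refine mk_image_le.trans ?_
  exact mk_smallQ_aux hreg hch (SC C) hSC

/-- Cardinality bound for all stages `α ≤ (succ lam).ord`. -/
theorem mk_Bseq_le {lam : Cardinal.{u}} (hreg : ℵ₀ ≤ lam) (hι : #ι = lam)
    (hch : (2:Cardinal.{u}) ^ lam = Order.succ lam)
    {A : Set (ι → D → Option Bool)}
    (hdom : ∀ f ∈ A, ∀ ξ : ι, #{x | f ξ x ≠ none} < lam) :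
    ∀ α : Ordinal.{u}, α ≤ (Order.succ lam).ord →
      #(Bseq lam A α) ≤ Order.succ lam ∧ #(prevB lam A α) ≤ Order.succ lam := by
  intro α
  induction α using Ordinal.induction with
  | h α IH =>
    intro hα
    have hprev : #(prevB lam A α) ≤ Order.succ lam := by
      refine (mk_iUnion_le _).trans ?_
      have h1 : #α.ToType ≤ Order.succ lam := by
        rw [Cardinal.mk_toType]
        calc α.card ≤ ((Order.succ lam).ord).card := Ordinal.card_le_card hα
          _ = Order.succ lam := card_ord _
      have h2 : ⨆ i : α.ToType, #(Bseq lam A ((Ordinal.ToType.mk (o := α)).symm i).val) ≤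
          Order.succ lam := by
        refine ciSup_le' fun i => ?_
        have hlt := ((Ordinal.ToType.mk (o := α)).symm i).prop
        exact (IH _ hlt (le_of_lt (lt_of_lt_of_le hlt hα))).1
      calc _ ≤ Order.succ lam * Order.succ lam := mul_le_mul' h1 h2
        _ = Order.succ lam := mul_eq_self (hreg.trans (Order.le_succ lam))
    constructor
    · rw [Bseq_def]
      refine (mk_union_le _ _).trans ?_
      have hSC : #(SC (prevB lam A α)) ≤ Order.succ lam :=
        mk_SC_le hreg hprev fun h hh =>
          mk_dmn_of_isGood hreg hι hdom (isGood_prevB hh)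
      have hW := mk_W_le (A := A) hreg hch hSC
      calc #(prevB lam A α) + #(W lam A (prevB lam A α)) ≤
            Order.succ lam + Order.succ lam := add_le_add hprev hW
        _ = Order.succ lam := add_eq_self (hreg.trans (Order.le_succ lam))
    · exact hprev

/-- The key witness property of `W`. -/
theorem exists_witness {lam : Cardinal.{u}}
    {A C : Set (ι → D → Option Bool)} {g : ι → D → Option Bool}
    (hg : g ∈ A) (hgd : #(dmn g) ≤ lam) :
    ∃ h, h ∈ W lam A C ∧ h ∈ A ∧ rrestr C h = rrestr C g := by
  classical
  set q := rrestr C g with hq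
  have hqsmall : q ∈ smallQ lam C := by
    constructor
    · intro z hz
      by_contra hznot
      have : q z = none := by simp [hq, rrestr, hznot]
      exact hz this
    · have hsub : {z | q z ≠ none} ⊆ dmn g := by
        intro z hz
        simp only [hq, rrestr, Set.mem_setOf_eq] at hz
        by_cases hzc : z ∈ SC C
        · rw [if_pos hzc] at hz; exact hz
        · rw [if_neg hzc] at hz; exact absurd rfl hz
      exact (mk_le_mk_of_subset hsub).trans hgd
  have hex : ∃ g' ∈ A, rrestr C g' = q := ⟨g, hg, rfl⟩
  refine ⟨pick A C q, Set.mem_image_of_mem _ hqsmall, ?_, ?_⟩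
  · unfold pick
    rw [dif_pos hex]
    exact hex.choose_spec.1
  · unfold pick
    rw [dif_pos hex]
    exact hex.choose_spec.2

end Stmt2Proof

open Stmt2Proof in
/-- Let `λ` be regular with `2 ^ λ = λ⁺` and let `ι` be an index type of size `λ`.
Any pairwise (coordinatewise) incompatible family of `λ`-sequences of partial
0-1 functions on `D`, each coordinate having domain of size `< λ`, has
cardinality at most `λ⁺` (the full-support `λ`-fold product is `λ⁺⁺`-c.c.). -/
theorem stmt2 {D : Type u} {ι : Type u} (lam : Cardinal.{u})
    (hreg : lam.IsRegular)
    (hch : (2 : Cardinal.{u}) ^ lam = Order.succ lam)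
    (hι : #ι = lam)
    (A : Set (ι → D → Option Bool))
    (hdom : ∀ f ∈ A, ∀ ξ : ι, #{x | f ξ x ≠ none} < lam)
    (hanti : ∀ f ∈ A, ∀ g ∈ A, f ≠ g → ∃ ξ : ι, ¬ Compat (f ξ) (g ξ)) :
    #↥A ≤ Order.succ lam := by
  classical
  have hal : ℵ₀ ≤ lam := hreg.aleph0_le
  have hals : ℵ₀ ≤ Order.succ lam := hal.trans (Order.le_succ lam)
  set O : Ordinal.{u} := (Order.succ lam).ord with hO
  set P : Set (ι → D → Option Bool) := prevB lam A O with hP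
  have hPcard : #P ≤ Order.succ lam :=
    (mk_Bseq_le hal hι hch hdom O le_rfl).2
  -- the main claim: A ⊆ P
  have hAP : A ⊆ P := by
    intro g hgA
    by_contra hgP
    have hgd : #(dmn g) ≤ lam := mk_dmn_le hal hι (hdom g hgA)
    -- every point of dmn g ∩ SC P appears at some stage < O
    have hstage : ∀ z : ↥(dmn g ∩ SC P), ∃ β : Ordinal.{u}, β < O ∧
        z.1 ∈ SC (Bseq lam A β) := by
      rintro ⟨z, hz1, hz2⟩
      obtain ⟨h, hhP, hzh⟩ := Set.mem_iUnion₂.1 hz2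
      obtain ⟨β, hβ, hmem⟩ := mem_prevB hhP
      exact ⟨β, hβ, mem_SC hmem hzh⟩
    choose φ hφlt hφmem using hstage
    -- sup of the stages is < O by regularity
    have hZcard : #(↥(dmn g ∩ SC P)) < (Order.succ lam) := by
      have : #(↥(dmn g ∩ SC P)) ≤ lam :=
        (mk_le_mk_of_subset Set.inter_subset_left).trans hgd
      exact this.trans_lt (Order.lt_succ lam)
    have hcof : ((Order.succ lam).ord).cof = Order.succ lam :=
      (isRegular_succ hal).cof_eq
    have hsup : (⨆ z, φ z) < O := by
      apply Ordinal.iSup_lt_ord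
      · rw [hO, hcof]; exact hZcard
      · exact hφlt
    have hlim : Order.IsSuccLimit O := Cardinal.isSuccLimit_ord hals
    set γ : Ordinal.{u} := Order.succ (⨆ z, φ z) with hγ
    have hγO : γ < O := hlim.succ_lt hsup
    set C : Set (ι → D → Option Bool) := prevB lam A γ with hC
    -- dmn g ∩ SC P ⊆ SC C
    have hsubC : dmn g ∩ SC P ⊆ SC C := by
      intro z hz
      have hle : φ ⟨z, hz⟩ ≤ ⨆ w, φ w := le_ciSup (Ordinal.bddAbove_range φ) ⟨z, hz⟩
      have hφz : φ ⟨z, hz⟩ < γ := lt_of_le_of_lt hle (Order.lt_succ _)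
      refine SC_mono (Bseq_subset_prevB hφz) (hφmem ⟨z, hz⟩)
    -- get the witness
    obtain ⟨h, hhW, hhA, hrr⟩ := exists_witness (C := C) hgA hgd
    have hhP : h ∈ P := by
      have h1 : h ∈ Bseq lam A γ := by
        rw [Bseq_def]; exact Or.inr hhW
      exact Bseq_subset_prevB hγO h1
    have hne : g ≠ h := by
      rintro rfl
      exact hgP hhP
    obtain ⟨ξ, hξ⟩ := hanti g hgA h hhA hne
    rw [Compat] at hξ
    push_neg at hξ
    obtain ⟨x, a, b, hga, hhb, hab⟩ := hξ
    have hzg : ((ξ, x) : ι × D) ∈ dmn g := by simp [dmn, hga]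
    have hzh : ((ξ, x) : ι × D) ∈ dmn h := by simp [dmn, hhb]
    have hzSC : ((ξ, x) : ι × D) ∈ SC C :=
      hsubC (Set.mem_inter hzg (mem_SC hhP hzh))
    have e1 : rrestr C g (ξ, x) = some a := by
      rw [rrestr_of_mem hzSC]; exact hga
    have e2 : rrestr C h (ξ, x) = some b := by
      rw [rrestr_of_mem hzSC]; exact hhb
    rw [hrr, e1] at e2
    exact hab (Option.some.inj e2)
  exact (mk_le_mk_of_subset hAP).trans hPcard
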